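/- Fix σ > 0, μ₀ ≥ 0, thresholds τ* > τ ≥ 0, an integer C_u ≥ 1, and ε ≥ 0. Let q = Φ((τ*-τ)/σ), μ(a) = √(a/σ² + aμ₀²), f(μ,ε) = Φ(μ/2 - ε/μ) - e^εΦ(-μ/2 - ε/μ). Define δ* as the maximum of: (i) 1 - q^{C_u}; (ii) max over a₊ + a₌ = C_u, a₊ > 0 of 1 - q^{a₌} + q^{a₌} f(μ(a₊), ε - a₌ ln q); (iii) max over a₊ + a₌ = C_u, a₊ > 0 of f(μ(a₊), ε + a₌ ln q). Then max(1 - q^{C_u}, f(μ(C_u), ε)) ≤ δ* < (1 - q^{C_u}) + f(μ(C_u), ε), provided both 1 - q^{C_u} > 0 and f(μ(C_u), ε) > 0. -/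

import Mathlib

noncomputable def stdNormalPDF (x : ℝ) : ℝ :=
  (Real.sqrt (2 * Real.pi))⁻¹ * Real.exp (-x ^ 2 / 2)

noncomputable def stdNormalCDF (x : ℝ) : ℝ := ∫ t in Set.Iic x, stdNormalPDF t

noncomputable def gaussF (μ ε : ℝ) : ℝ :=
  stdNormalCDF (μ / 2 - ε / μ) - Real.exp ε * stdNormalCDF (-μ / 2 - ε / μ)

open MeasureTheory Real Set

lemma pdf_pos (x : ℝ) : 0 < stdNormalPDF x := by
  unfold stdNormalPDF
  positivity

lemma pdf_cont : Continuous stdNormalPDF := by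
  unfold stdNormalPDF
  continuity

lemma pdf_eq (x : ℝ) : stdNormalPDF x = (Real.sqrt (2 * Real.pi))⁻¹ * Real.exp (-(1/2) * x ^ 2) := by
  unfold stdNormalPDF; ring_nf

lemma pdf_integrable : Integrable stdNormalPDF := by
  have h := (integrable_exp_neg_mul_sq (by norm_num : (0:ℝ) < 1/2)).const_mul
    (Real.sqrt (2 * Real.pi))⁻¹
  refine h.congr ?_
  filter_upwards with x
  rw [pdf_eq]

lemma pdf_total : ∫ x, stdNormalPDF x = 1 := by
  have h : ∫ x, stdNormalPDF x = (Real.sqrt (2 * Real.pi))⁻¹ * ∫ x : ℝ, Real.exp (-(1/2) * x ^ 2) := by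
    rw [← integral_const_mul]
    congr 1; ext x; rw [pdf_eq]
  rw [h, integral_gaussian]
  have : Real.pi / (1/2) = 2 * Real.pi := by ring
  rw [this]
  rw [inv_mul_cancel₀]
  positivity

lemma cdf_sub (a b : ℝ) : stdNormalCDF b - stdNormalCDF a = ∫ x in a..b, stdNormalPDF x :=
  intervalIntegral.integral_Iic_sub_Iic pdf_integrable.integrableOn pdf_integrable.integrableOn

lemma cdf_pos (x : ℝ) : 0 < stdNormalCDF x := by
  have : 0 < ∫ t in Set.Iic x, stdNormalPDF t := by
    rw [setIntegral_pos_iff_support_of_nonneg_ae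
      (Filter.Eventually.of_forall fun t => (pdf_pos t).le) pdf_integrable.integrableOn]
    have : Function.support stdNormalPDF = Set.univ := by
      ext t; simp [Function.mem_support, (pdf_pos t).ne']
    rw [this, Set.univ_inter]
    simp [Real.volume_Iic]
  exact this

lemma cdf_mono : Monotone stdNormalCDF := by
  intro a b hab
  have h := cdf_sub a b
  have : 0 ≤ ∫ x in a..b, stdNormalPDF x :=
    intervalIntegral.integral_nonneg hab fun t _ => (pdf_pos t).le
  linarith

lemma cdf_lt_one (x : ℝ) : stdNormalCDF x < 1 := by
  have h := intervalIntegral.integral_Iic_add_Ioi (b := x) pdf_integrable.integrableOn pdf_integrable.integrableOn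
  rw [pdf_total] at h
  have hpos : 0 < ∫ t in Set.Ioi x, stdNormalPDF t := by
    rw [setIntegral_pos_iff_support_of_nonneg_ae
      (Filter.Eventually.of_forall fun t => (pdf_pos t).le) pdf_integrable.integrableOn]
    have hs : Function.support stdNormalPDF = Set.univ := by
      ext t; simp [Function.mem_support, (pdf_pos t).ne']
    rw [hs, Set.univ_inter]
    simp [Real.volume_Ioi]
  unfold stdNormalCDF
  linarith

lemma cdf_neg (x : ℝ) : stdNormalCDF (-x) = 1 - stdNormalCDF x := by
  have h := intervalIntegral.integral_Iic_add_Ioi (b := x) pdf_integrable.integrableOn pdf_integrable.integrableOn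
  rw [pdf_total] at h
  have h2 : stdNormalCDF (-x) = ∫ t in Set.Ioi x, stdNormalPDF t := by
    unfold stdNormalCDF
    rw [← integral_comp_neg_Ioi]
    congr 1; ext t
    unfold stdNormalPDF; ring_nf
  rw [h2]
  unfold stdNormalCDF
  linarith

lemma cdf_deriv (x : ℝ) : HasDerivAt stdNormalCDF (stdNormalPDF x) x := by
  have key : ∀ y : ℝ, stdNormalCDF y = stdNormalCDF 0 + ∫ t in (0:ℝ)..y, stdNormalPDF t := by
    intro y
    have := cdf_sub 0 y
    linarith
  have hd : HasDerivAt (fun y => stdNormalCDF 0 + ∫ t in (0:ℝ)..y, stdNormalPDF t)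
      (stdNormalPDF x) x := by
    refine HasDerivAt.const_add _ ?_
    exact intervalIntegral.integral_hasDerivAt_right
      pdf_integrable.intervalIntegrable
      (pdf_cont.stronglyMeasurableAtFilter _ _)
      pdf_cont.continuousAt
  exact hd.congr_of_eventuallyEq (Filter.Eventually.of_forall fun y => (key y).symm ▸ rfl)

lemma exp_pdf_identity (μ ε : ℝ) (hμ : μ ≠ 0) :
    Real.exp ε * stdNormalPDF (-μ/2 - ε/μ) = stdNormalPDF (μ/2 - ε/μ) := by
  unfold stdNormalPDF
  rw [mul_left_comm, ← Real.exp_add]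
  congr 2
  field_simp
  ring

lemma pdf_shift_le (μ ε x : ℝ) (hμ : 0 < μ) (hx : x ≤ ε/μ + μ/2) :
    stdNormalPDF (x - μ) ≤ Real.exp ε * stdNormalPDF x := by
  unfold stdNormalPDF
  rw [mul_left_comm, ← Real.exp_add]
  have hc : (0:ℝ) < (Real.sqrt (2 * Real.pi))⁻¹ := by positivity
  refine mul_le_mul_of_nonneg_left ?_ hc.le
  apply Real.exp_le_exp.2
  have : μ * x ≤ ε + μ^2/2 := by
    have := mul_le_mul_of_nonneg_left hx hμ.le
    calc μ * x ≤ μ * (ε/μ + μ/2) := this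
    _ = ε + μ^2/2 := by field_simp
  nlinarith

lemma gaussF_hasDerivAt_eps (μ : ℝ) (hμ : 0 < μ) (ε : ℝ) :
    HasDerivAt (fun e => gaussF μ e) (-(Real.exp ε * stdNormalCDF (-μ/2 - ε/μ))) ε := by
  have h1 : HasDerivAt (fun e : ℝ => μ/2 - e/μ) (-μ⁻¹) ε := by
    simpa using ((hasDerivAt_id ε).div_const μ).const_sub (μ/2)
  have h2 : HasDerivAt (fun e : ℝ => -μ/2 - e/μ) (-μ⁻¹) ε := by
    simpa using ((hasDerivAt_id ε).div_const μ).const_sub (-μ/2)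
  have H1 := (cdf_deriv (μ/2 - ε/μ)).comp ε h1
  have H2 := (cdf_deriv (-μ/2 - ε/μ)).comp ε h2
  have H3 := (Real.hasDerivAt_exp ε).mul H2
  have H := H1.sub H3
  have hid := exp_pdf_identity μ ε hμ.ne'
  convert H using 1
  · rfl
  · rfl
  · rfl
  simp only [Function.comp]
  have : stdNormalPDF (μ/2 - ε/μ) * -μ⁻¹ -
      (Real.exp ε * stdNormalCDF (-μ/2 - ε/μ) + Real.exp ε * (stdNormalPDF (-μ/2 - ε/μ) * -μ⁻¹))
      = -(Real.exp ε * stdNormalCDF (-μ/2 - ε/μ))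
      - μ⁻¹ * (stdNormalPDF (μ/2 - ε/μ) - Real.exp ε * stdNormalPDF (-μ/2 - ε/μ)) := by ring
  rw [this, hid]; ring

lemma gaussF_anti_eps (μ : ℝ) (hμ : 0 < μ) : StrictAnti (fun e => gaussF μ e) := by
  apply strictAnti_of_deriv_neg
  intro e
  rw [(gaussF_hasDerivAt_eps μ hμ e).deriv]
  have := cdf_pos (-μ/2 - e/μ)
  have := Real.exp_pos e
  nlinarith

lemma gaussF_hasDerivAt_mu (ε m : ℝ) (hm : 0 < m) :
    HasDerivAt (fun μ => gaussF μ ε) (stdNormalPDF (m/2 - ε/m)) m := by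
  have h1 : HasDerivAt (fun μ : ℝ => μ/2 - ε/μ) (2⁻¹ + ε/m^2) m := by
    have := ((hasDerivAt_id m).div_const 2).sub ((hasDerivAt_inv hm.ne').const_mul ε)
    simp only [div_eq_mul_inv, one_mul] at this ⊢
    convert this using 1
    · rfl
    · rfl
    · rfl
    field_simp
    ring
  have h2 : HasDerivAt (fun μ : ℝ => -μ/2 - ε/μ) (-2⁻¹ + ε/m^2) m := by
    have := (((hasDerivAt_id m).neg).div_const 2).sub ((hasDerivAt_inv hm.ne').const_mul ε)
    simp only [div_eq_mul_inv, one_mul] at this ⊢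
    convert this using 1
    · rfl
    · rfl
    · rfl
    field_simp
    ring
  have H1 := (cdf_deriv (m/2 - ε/m)).comp m h1
  have H2 := ((cdf_deriv (-m/2 - ε/m)).comp m h2).const_mul (Real.exp ε)
  have H := H1.sub H2
  have hid := exp_pdf_identity m ε hm.ne'
  convert H using 1
  · rfl
  · rfl
  · rfl
  have : stdNormalPDF (m/2 - ε/m) * (2⁻¹ + ε/m^2) -
      Real.exp ε * (stdNormalPDF (-m/2 - ε/m) * (-2⁻¹ + ε/m^2))
      = stdNormalPDF (m/2 - ε/m) * (2⁻¹ + ε/m^2) -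
        (Real.exp ε * stdNormalPDF (-m/2 - ε/m)) * (-2⁻¹ + ε/m^2) := by ring
  rw [this, hid]; ring

lemma gaussF_mono_mu (ε : ℝ) : StrictMonoOn (fun μ => gaussF μ ε) (Set.Ioi 0) := by
  apply strictMonoOn_of_deriv_pos (convex_Ioi 0)
  · intro x hx
    exact ((gaussF_hasDerivAt_mu ε x hx).differentiableAt).continuousAt.continuousWithinAt
  · intro x hx
    rw [interior_Ioi] at hx
    rw [(gaussF_hasDerivAt_mu ε x hx).deriv]
    exact pdf_pos _

lemma gaussF_beta (μ ε β : ℝ) (hμ : 0 < μ) (hβ0 : 0 < β) (hβ1 : β ≤ 1) :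
    gaussF μ (ε + Real.log β) ≤ 1 - β + β * gaussF μ ε := by
  set s := (ε + Real.log β)/μ + μ/2 with hs
  set t := ε/μ + μ/2 with ht
  have hst : s ≤ t := by
    have hlog : Real.log β ≤ 0 := Real.log_nonpos hβ0.le hβ1
    have h2 : (ε + Real.log β)/μ ≤ ε/μ := by
      gcongr
      linarith
    rw [hs, ht]; linarith
  have key : stdNormalCDF (t-μ) - stdNormalCDF (s-μ) ≤
      Real.exp ε * (stdNormalCDF t - stdNormalCDF s) := by
    rw [cdf_sub, cdf_sub, ← intervalIntegral.integral_const_mul]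
    have hshift : (∫ x in (s-μ)..(t-μ), stdNormalPDF x) = ∫ x in s..t, stdNormalPDF (x - μ) := by
      rw [intervalIntegral.integral_comp_sub_right]
    rw [hshift]
    apply intervalIntegral.integral_mono_on hst
    · exact (pdf_integrable.comp_sub_right μ).intervalIntegrable
    · exact (pdf_integrable.const_mul _).intervalIntegrable
    · intro x hx
      exact pdf_shift_le μ ε x hμ (by rw [← ht]; exact hx.2)
  have e1 : gaussF μ (ε + Real.log β) =
      (1 - stdNormalCDF (s - μ)) - β * Real.exp ε * (1 - stdNormalCDF s) := by
    unfold gaussF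
    have a1 : μ/2 - (ε + Real.log β)/μ = -(s - μ) := by rw [hs]; ring
    have a2 : -μ/2 - (ε + Real.log β)/μ = -s := by rw [hs]; ring
    rw [a1, a2, cdf_neg, cdf_neg, Real.exp_add, Real.exp_log hβ0]
    ring
  have e2 : gaussF μ ε = (1 - stdNormalCDF (t - μ)) - Real.exp ε * (1 - stdNormalCDF t) := by
    unfold gaussF
    have a1 : μ/2 - ε/μ = -(t - μ) := by rw [ht]; ring
    have a2 : -μ/2 - ε/μ = -t := by rw [ht]; ring
    rw [a1, a2, cdf_neg, cdf_neg]
  rw [e1, e2]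
  have h0 : 0 ≤ stdNormalCDF (s - μ) := (cdf_pos _).le
  nlinarith [mul_le_mul_of_nonneg_left key hβ0.le]

theorem gshm_delta_sandwich (σ μ₀ τ τs : ℝ) (hσ : 0 < σ) (hμ₀ : 0 ≤ μ₀)
    (hτ0 : 0 ≤ τ) (hτ : τ < τs) (Cu : ℕ) (hCu : 1 ≤ Cu) (ε : ℝ) (hε : 0 ≤ ε)
    (q : ℝ) (hq : q = stdNormalCDF ((τs - τ) / σ))
    (μfun : ℕ → ℝ) (hμfun : ∀ a : ℕ, μfun a = Real.sqrt ((a : ℝ) / σ ^ 2 + (a : ℝ) * μ₀ ^ 2))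
    (hne : (Finset.range Cu).Nonempty)
    (δstar : ℝ)
    (hδstar : δstar =
      max (1 - q ^ Cu)
        (max
          ((Finset.range Cu).sup' hne (fun aeq =>
            1 - q ^ aeq + q ^ aeq *
              gaussF (μfun (Cu - aeq)) (ε - (aeq : ℝ) * Real.log q)))
          ((Finset.range Cu).sup' hne (fun aeq =>
            gaussF (μfun (Cu - aeq)) (ε + (aeq : ℝ) * Real.log q)))))
    (hδinf_pos : 0 < 1 - q ^ Cu) (hδG_pos : 0 < gaussF (μfun Cu) ε) :
    max (1 - q ^ Cu) (gaussF (μfun Cu) ε) ≤ δstar ∧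
      δstar < (1 - q ^ Cu) + gaussF (μfun Cu) ε := by
  have hq0 : 0 < q := hq ▸ cdf_pos _
  have hq1 : q < 1 := hq ▸ cdf_lt_one _
  have hμpos : ∀ a : ℕ, 1 ≤ a → 0 < μfun a := by
    intro a ha
    rw [hμfun]
    apply Real.sqrt_pos.2
    have h1 : (1:ℝ) ≤ (a:ℝ) := by exact_mod_cast ha
    have : 0 < (a:ℝ) / σ^2 := by positivity
    nlinarith [mul_nonneg (Nat.cast_nonneg a : (0:ℝ) ≤ a) (sq_nonneg μ₀)]
  have hμmono : ∀ a b : ℕ, a ≤ b → μfun a ≤ μfun b := by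
    intro a b hab
    rw [hμfun, hμfun]
    apply Real.sqrt_le_sqrt
    have h : (a:ℝ) ≤ (b:ℝ) := by exact_mod_cast hab
    have h1 : (a:ℝ)/σ^2 ≤ (b:ℝ)/σ^2 := by gcongr
    nlinarith [sq_nonneg μ₀]
  -- per-element facts
  have hB : ∀ a : ℕ, a < Cu → gaussF (μfun (Cu - a)) ε ≤ gaussF (μfun Cu) ε := by
    intro a ha
    have h1 : 1 ≤ Cu - a := by omega
    have hpos := hμpos _ h1
    have hposC := hμpos _ hCu
    exact (gaussF_mono_mu ε).monotoneOn (Set.mem_Ioi.2 hpos) (Set.mem_Ioi.2 hposC)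
      (hμmono _ _ (by omega))
  have hqB : ∀ (a : ℕ) (f : ℝ), f ≤ gaussF (μfun Cu) ε → q ^ a * f ≤ gaussF (μfun Cu) ε := by
    intro a f hf
    rcases le_or_gt f 0 with h | h
    · have : q ^ a * f ≤ 0 := mul_nonpos_of_nonneg_of_nonpos (by positivity) h
      linarith
    · calc q ^ a * f ≤ 1 * f := by
            apply mul_le_mul_of_nonneg_right ?_ h.le
            exact pow_le_one₀ hq0.le hq1.le
        _ = f := one_mul f
        _ ≤ _ := hf
  constructor
  · rw [hδstar]
    apply max_le (le_max_left _ _)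
    have h0 : (0:ℕ) ∈ Finset.range Cu := Finset.mem_range.2 hCu
    have hle := Finset.le_sup' (f := fun aeq =>
      gaussF (μfun (Cu - aeq)) (ε + (aeq : ℝ) * Real.log q)) h0
    simp only [Nat.sub_zero, Nat.cast_zero, zero_mul, add_zero] at hle
    exact hle.trans ((le_max_right _ _).trans (le_max_right _ _))
  · rw [hδstar]
    apply max_lt (by linarith)
    apply max_lt
    · rw [Finset.sup'_lt_iff]
      intro a ha
      rw [Finset.mem_range] at ha
      have h1 : q ^ Cu < q ^ a := pow_lt_pow_right_of_lt_one₀ hq0 hq1 ha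
      have h2 : gaussF (μfun (Cu - a)) (ε - (a:ℝ) * Real.log q) ≤ gaussF (μfun (Cu - a)) ε := by
        apply (gaussF_anti_eps _ (hμpos _ (by omega))).antitone
        have : Real.log q < 0 := Real.log_neg hq0 hq1
        nlinarith [(Nat.cast_nonneg a : (0:ℝ) ≤ (a:ℝ))]
      have h3 := hqB a _ (h2.trans (hB a ha))
      linarith
    · rw [Finset.sup'_lt_iff]
      intro a ha
      rw [Finset.mem_range] at ha
      have h1 : q ^ Cu < q ^ a := pow_lt_pow_right_of_lt_one₀ hq0 hq1 ha
      have hlog : (a:ℝ) * Real.log q = Real.log (q ^ a) := by rw [Real.log_pow]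
      have hbeta := gaussF_beta (μfun (Cu - a)) ε (q ^ a) (hμpos _ (by omega))
        (by positivity) (pow_le_one₀ hq0.le hq1.le)
      rw [← hlog] at hbeta
      have h3 := hqB a _ (hB a ha)
      linarith
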